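/- The part of K₋ lying in the interval [−10, 1] is exactly the image of C under h: K₋ ∩ [−10, 1] = h '' C. -/
import Mathlib


noncomputable section

/-- The affine contraction of ratio 1/100 fixing 0. -/
def T0 (x : ℝ) : ℝ := x / 100

/-- The affine contraction of ratio 1/100 fixing 1. -/
def T1 (x : ℝ) : ℝ := 1 + (x - 1) / 100

/-- The affine contraction of ratio 1/100 fixing -1. -/
def Tm1 (x : ℝ) : ℝ := -1 + (x + 1) / 100

/-- The inverse of `T0`. -/
def T0inv (x : ℝ) : ℝ := 100 * x

/-- The `i`-th iterate of `T0` for `i ≥ 0`, and the `|i|`-th iterate of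
`T0⁻¹ : x ↦ 100 x` for `i < 0`. -/
def T0z : ℤ → ℝ → ℝ
  | Int.ofNat n => T0^[n]
  | Int.negSucc n => T0inv^[n + 1]

/-- The set `K₊ = {0} ∪ ⋃ i ∈ ℤ, T₀^[i] '' (C₁ ∪ C₋₁)` where `C₁ = T₁ '' C`,
`C₋₁ = T₋₁ '' C`. -/
def Kplus (C : Set ℝ) : Set ℝ := {0} ∪ ⋃ i : ℤ, T0z i '' (T1 '' C ∪ Tm1 '' C)

/-- The map `Q : x ↦ x/10`. -/
def Q (x : ℝ) : ℝ := x / 10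

/-- The set `K₋ = Q '' K₊`. -/
def Kminus (C : Set ℝ) : Set ℝ := Q '' Kplus C

/-- The bijection `h` : `x ↦ x/10` for `x ≥ 0`, `x ↦ 10 x` for `x < 0`. -/
def hmap (x : ℝ) : ℝ := if 0 ≤ x then x / 10 else 10 * x

/-- The inverse of `h` : `y ↦ 10 y` for `y ≥ 0`, `y ↦ y/10` for `y < 0`. -/
def hmapInv (y : ℝ) : ℝ := if 0 ≤ y then 10 * y else y / 10

/-- The inverse of `T₋₁` : `x ↦ 100 x + 99`. -/
def Tm1inv (x : ℝ) : ℝ := 100 * x + 99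

lemma T0_iter (n : ℕ) (x : ℝ) : T0^[n] x = x / 100 ^ n := by
  induction n with
  | zero => simp
  | succ n ih => rw [Function.iterate_succ_apply', ih, T0]; rw [pow_succ]; ring

lemma T0inv_iter (n : ℕ) (x : ℝ) : T0inv^[n] x = 100 ^ n * x := by
  induction n with
  | zero => simp
  | succ n ih => rw [Function.iterate_succ_apply', ih, T0inv]; rw [pow_succ]; ring

lemma T0z_ofNat (n : ℕ) (x : ℝ) : T0z (Int.ofNat n) x = x / 100 ^ n := by
  rw [show T0z (Int.ofNat n) = T0^[n] from rfl, T0_iter]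

lemma T0z_negSucc (n : ℕ) (x : ℝ) : T0z (Int.negSucc n) x = 100 ^ (n + 1) * x := by
  rw [show T0z (Int.negSucc n) = T0inv^[n + 1] from rfl, T0inv_iter]

lemma C_bdd (C : Set ℝ) (hne : C.Nonempty) (hcomp : IsCompact C)
    (hself : C = Tm1 '' C ∪ T0 '' C ∪ T1 '' C) : C ⊆ Set.Icc (-1 : ℝ) 1 := by
  have hbA := hcomp.bddAbove
  have hbB := hcomp.bddBelow
  have hsup : sSup C ≤ 1 := by
    have hs := hself.subset (hcomp.sSup_mem hne)
    rcases hs with (⟨y, hy, hxy⟩ | ⟨y, hy, hxy⟩) | ⟨y, hy, hxy⟩ <;>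
      have hle : y ≤ sSup C := le_csSup hbA hy
    · rw [Tm1] at hxy; linarith
    · rw [T0] at hxy; linarith
    · rw [T1] at hxy; linarith
  have hinf : (-1 : ℝ) ≤ sInf C := by
    have hs := hself.subset (hcomp.sInf_mem hne)
    rcases hs with (⟨y, hy, hxy⟩ | ⟨y, hy, hxy⟩) | ⟨y, hy, hxy⟩ <;>
      have hle : sInf C ≤ y := csInf_le hbB hy
    · rw [Tm1] at hxy; linarith
    · rw [T0] at hxy; linarith
    · rw [T1] at hxy; linarith
  intro x hx
  exact ⟨le_trans hinf (csInf_le hbB hx), le_trans (le_csSup hbA hx) hsup⟩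

lemma pow_div_mem (C : Set ℝ) (hself : C = Tm1 '' C ∪ T0 '' C ∪ T1 '' C)
    {x : ℝ} (hx : x ∈ C) (n : ℕ) : x / 100 ^ n ∈ C := by
  induction n with
  | zero => simpa using hx
  | succ n ih =>
    have h : T0 (x / 100 ^ n) ∈ C := by
      rw [hself]; exact Or.inl (Or.inr ⟨x / 100 ^ n, ih, rfl⟩)
    have : T0 (x / 100 ^ n) = x / 100 ^ (n + 1) := by rw [T0, pow_succ, div_div]
    rwa [this] at h

lemma zero_mem (C : Set ℝ) (hne : C.Nonempty) (hcomp : IsCompact C)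
    (hself : C = Tm1 '' C ∪ T0 '' C ∪ T1 '' C) : (0 : ℝ) ∈ C := by
  obtain ⟨x, hx⟩ := hne
  have key : ∀ n : ℕ, x / 100 ^ n ∈ C := fun n => pow_div_mem C hself hx n
  have htend : Filter.Tendsto (fun n : ℕ => x / 100 ^ n) Filter.atTop (nhds 0) := by
    have h1 : Filter.Tendsto (fun n : ℕ => x * (1 / 100 : ℝ) ^ n) Filter.atTop
        (nhds (x * 0)) :=
      Filter.Tendsto.const_mul x
        (tendsto_pow_atTop_nhds_zero_of_lt_one (by norm_num) (by norm_num))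
    have : (fun n : ℕ => x * (1 / 100 : ℝ) ^ n) = fun n : ℕ => x / 100 ^ n := by
      funext n; rw [div_pow, one_pow]; ring
    rw [this, mul_zero] at h1
    exact h1
  exact hcomp.isClosed.mem_of_tendsto htend (Filter.Eventually.of_forall key)

lemma escape_pos (C : Set ℝ) (hne : C.Nonempty) (hcomp : IsCompact C)
    (hself : C = Tm1 '' C ∪ T0 '' C ∪ T1 '' C) :
    ∀ x ∈ C, 0 < x → ∃ (n : ℕ) (t : ℝ), t ∈ T1 '' C ∧ x = t / 100 ^ n := by
  have hsub := C_bdd C hne hcomp hself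
  have key : ∀ (N : ℕ) (x : ℝ), x ∈ C → (1 / 100 : ℝ) ^ N < x →
      ∃ (n : ℕ) (t : ℝ), t ∈ T1 '' C ∧ x = t / 100 ^ n := by
    intro N
    induction N with
    | zero =>
      intro x hx h1
      simp only [pow_zero] at h1
      exact absurd (hsub hx).2 (not_le.2 h1)
    | succ N ih =>
      intro x hx hlt
      have hpos : 0 < x := lt_trans (by positivity) hlt
      by_cases hbig : 1 / 100 < x
      · rcases hself.subset hx with (⟨y, hy, hxy⟩ | ⟨y, hy, hxy⟩) | h
        · exfalso; rw [Tm1] at hxy; have := (hsub hy).2; linarith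
        · exfalso; rw [T0] at hxy; have := (hsub hy).2; linarith
        · exact ⟨0, x, h, by simp⟩
      · push_neg at hbig
        have h100 : 100 * x ∈ C := by
          rcases hself.subset hx with (⟨y, hy, hxy⟩ | ⟨y, hy, hxy⟩) | ⟨y, hy, hxy⟩
          · exfalso; rw [Tm1] at hxy; have := (hsub hy).2; linarith
          · rw [T0] at hxy; have : y = 100 * x := by linarith
            rwa [← this]
          · exfalso; rw [T1] at hxy; have := (hsub hy).1; linarith
        have hlt' : (1 / 100 : ℝ) ^ N < 100 * x := by
          rw [pow_succ] at hlt; nlinarith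
        obtain ⟨n, t, ht, heq⟩ := ih (100 * x) h100 hlt'
        refine ⟨n + 1, t, ht, ?_⟩
        rw [pow_succ]
        rw [eq_div_iff (by positivity)] at heq ⊢
        linarith
  intro x hx hpos
  obtain ⟨N, hN⟩ := exists_pow_lt_of_lt_one hpos (show (1 / 100 : ℝ) < 1 by norm_num)
  exact key N x hx hN

lemma escape_neg (C : Set ℝ) (hne : C.Nonempty) (hcomp : IsCompact C)
    (hself : C = Tm1 '' C ∪ T0 '' C ∪ T1 '' C) :
    ∀ x ∈ C, x < 0 → ∃ (n : ℕ) (t : ℝ), t ∈ Tm1 '' C ∧ x = t / 100 ^ n := by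
  have hsub := C_bdd C hne hcomp hself
  have key : ∀ (N : ℕ) (x : ℝ), x ∈ C → (1 / 100 : ℝ) ^ N < -x →
      ∃ (n : ℕ) (t : ℝ), t ∈ Tm1 '' C ∧ x = t / 100 ^ n := by
    intro N
    induction N with
    | zero =>
      intro x hx h1
      simp only [pow_zero] at h1
      exact absurd (hsub hx).1 (by linarith)
    | succ N ih =>
      intro x hx hlt
      have hneg : x < 0 := by nlinarith [pow_pos (show (0:ℝ) < 1/100 by norm_num) (N+1)]
      by_cases hbig : x < -(1 / 100)
      · rcases hself.subset hx with (h | ⟨y, hy, hxy⟩) | ⟨y, hy, hxy⟩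
        · exact ⟨0, x, h, by simp⟩
        · exfalso; rw [T0] at hxy; have := (hsub hy).1; linarith
        · exfalso; rw [T1] at hxy; have := (hsub hy).1; linarith
      · push_neg at hbig
        have h100 : 100 * x ∈ C := by
          rcases hself.subset hx with (⟨y, hy, hxy⟩ | ⟨y, hy, hxy⟩) | ⟨y, hy, hxy⟩
          · exfalso; rw [Tm1] at hxy; have := (hsub hy).2; linarith
          · rw [T0] at hxy; have : y = 100 * x := by linarith
            rwa [← this]
          · exfalso; rw [T1] at hxy; have := (hsub hy).1; linarith
        have hlt' : (1 / 100 : ℝ) ^ N < -(100 * x) := by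
          rw [pow_succ] at hlt; nlinarith
        obtain ⟨n, t, ht, heq⟩ := ih (100 * x) h100 hlt'
        refine ⟨n + 1, t, ht, ?_⟩
        rw [pow_succ]
        rw [eq_div_iff (by positivity)] at heq ⊢
        linarith
  intro x hx hneg
  obtain ⟨N, hN⟩ := exists_pow_lt_of_lt_one (show (0:ℝ) < -x by linarith)
    (show (1 / 100 : ℝ) < 1 by norm_num)
  exact key N x hx hN

theorem stmt_11 (C : Set ℝ) (hne : C.Nonempty) (hcomp : IsCompact C)
    (hself : C = Tm1 '' C ∪ T0 '' C ∪ T1 '' C) :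
    Kminus C ∩ Set.Icc (-10 : ℝ) 1 = hmap '' C := by
  have hsub := C_bdd C hne hcomp hself
  have h0 := zero_mem C hne hcomp hself
  ext y
  constructor
  · rintro ⟨⟨z, hz, rfl⟩, hyI⟩
    rcases hz with hz0 | hz
    · rw [Set.mem_singleton_iff] at hz0; subst hz0
      refine ⟨0, h0, ?_⟩
      simp [hmap, Q]
    · rw [Set.mem_iUnion] at hz
      obtain ⟨i, t, ht, rfl⟩ := hz
      rcases ht with ⟨c, hc, rfl⟩ | ⟨c, hc, rfl⟩
      · -- t = T1 c, so t ∈ [49/50, 1]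
        have hcb := hsub hc
        have ht1 : (49 : ℝ) / 50 ≤ T1 c := by rw [T1]; linarith [hcb.1]
        have ht2 : T1 c ≤ 1 := by rw [T1]; linarith [hcb.2]
        have htC : T1 c ∈ C := by rw [hself]; exact Or.inr ⟨c, hc, rfl⟩
        cases i with
        | ofNat n =>
          rw [T0z_ofNat] at hyI ⊢
          refine ⟨T1 c / 100 ^ n, pow_div_mem C hself htC n, ?_⟩
          rw [hmap, if_pos (div_nonneg (by linarith) (by positivity))]
          rfl
        | negSucc n =>
          exfalso
          rw [T0z_negSucc] at hyI
          have h1 : (100 : ℝ) ≤ 100 ^ (n + 1) := le_self_pow₀ (by norm_num) (Nat.succ_ne_zero n)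
          have h2 := hyI.2
          rw [Q] at h2
          nlinarith
      · -- t = Tm1 c, so t ∈ [-1, -49/50]
        have hcb := hsub hc
        have ht1 : (-1 : ℝ) ≤ Tm1 c := by rw [Tm1]; linarith [hcb.1]
        have ht2 : Tm1 c ≤ -(49 / 50 : ℝ) := by rw [Tm1]; linarith [hcb.2]
        have htC : Tm1 c ∈ C := by rw [hself]; exact Or.inl (Or.inl ⟨c, hc, rfl⟩)
        cases i with
        | ofNat n =>
          rw [T0z_ofNat] at hyI ⊢
          refine ⟨Tm1 c / 100 ^ (n + 1), pow_div_mem C hself htC (n + 1), ?_⟩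
          have hneg : Tm1 c / 100 ^ (n + 1) < 0 :=
            div_neg_of_neg_of_pos (by linarith) (by positivity)
          rw [hmap, if_neg (not_le.2 hneg), Q, pow_succ]
          ring
        | negSucc n =>
          rw [T0z_negSucc] at hyI ⊢
          cases n with
          | zero =>
            refine ⟨Tm1 c, htC, ?_⟩
            rw [hmap, if_neg (not_le.2 (show Tm1 c < 0 by linarith)), Q]
            ring
          | succ m =>
            exfalso
            have h1 : (10000 : ℝ) ≤ 100 ^ (m + 1 + 1) := by
              calc (10000 : ℝ) = 100 ^ 2 := by norm_num
              _ ≤ 100 ^ (m + 1 + 1) := pow_le_pow_right₀ (by norm_num) (by omega)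
            have h2 := hyI.1
            rw [Q] at h2
            nlinarith
  · rintro ⟨x, hx, rfl⟩
    have hxb := hsub hx
    have hIcc : hmap x ∈ Set.Icc (-10 : ℝ) 1 := by
      rw [hmap]
      split_ifs with h
      · constructor <;> [linarith [hxb.1]; linarith [hxb.2]]
      · constructor <;> [linarith [hxb.1]; linarith [hxb.2]]
    refine ⟨?_, hIcc⟩
    rcases lt_trichotomy x 0 with hneg | h00 | hpos
    · obtain ⟨n, t, ht, heq⟩ := escape_neg C hne hcomp hself x hx hneg
      refine ⟨100 * x, ?_, ?_⟩
      · refine Or.inr (Set.mem_iUnion.2 ?_)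
        cases n with
        | zero =>
          refine ⟨Int.negSucc 0, t, Or.inr ht, ?_⟩
          rw [T0z_negSucc]
          simp only [pow_zero] at heq
          rw [heq]; norm_num
        | succ m =>
          refine ⟨Int.ofNat m, t, Or.inr ht, ?_⟩
          rw [T0z_ofNat, heq, pow_succ]
          ring
      · rw [Q, hmap, if_neg (not_le.2 hneg)]; ring
    · subst h00
      exact ⟨0, Or.inl rfl, by simp [Q, hmap]⟩
    · obtain ⟨n, t, ht, heq⟩ := escape_pos C hne hcomp hself x hx hpos
      refine ⟨x, ?_, ?_⟩
      · refine Or.inr (Set.mem_iUnion.2 ⟨Int.ofNat n, t, Or.inl ht, ?_⟩)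
        rw [T0z_ofNat, heq]
      · rw [Q, hmap, if_pos (le_of_lt hpos)]
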